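/- Let p : ℂ⁴ → ℂ be a homogeneous polynomial of odd degree d that is not identically zero. Then there exists a nonzero real vector (x₀, x₁, x₂, x₃) ∈ ℝ⁴ with p(x₀, x₁, x₂, x₃) = 0. -/

import Mathlib

open Complex Set

/-- A continuous function whose exponential is pinned to a single value is constant
on an interval. -/
private lemma const_of_exp_eq {a b : ℝ} (hab : a ≤ b) (h : ℝ → ℂ)
    (hc : ContinuousOn h (Set.Icc a b))
    (he : ∀ t ∈ Set.Icc a b, Complex.exp (h t) = Complex.exp (h a)) :
    ∀ t ∈ Set.Icc a b, h t = h a := by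
  intro t ht
  obtain ⟨n, hn⟩ := Complex.exp_eq_exp_iff_exists_int.mp (he t ht)
  have him : ∀ u ∈ Set.Icc a b, ∃ m : ℤ, (h u).im = (h a).im + m * (2 * Real.pi) := by
    intro u hu
    obtain ⟨m, hm⟩ := Complex.exp_eq_exp_iff_exists_int.mp (he u hu)
    refine ⟨m, ?_⟩
    rw [hm]
    simp
  have hfc : ContinuousOn (fun u => (h u).im) (Set.Icc a b) :=
    Complex.continuous_im.comp_continuousOn hc
  have htim : (h t).im = (h a).im + n * (2 * Real.pi) := by
    rw [hn]; simp
  have hn0 : n = 0 := by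
    by_contra hne
    have hsub : Set.Icc a t ⊆ Set.Icc a b := Set.Icc_subset_Icc le_rfl ht.2
    have hπ := Real.pi_pos
    rcases lt_or_gt_of_ne hne with hlt | hgt
    · -- n < 0
      have hnle : (n : ℝ) ≤ -1 := by exact_mod_cast (by omega : n ≤ -1)
      have hmem : (h a).im - Real.pi ∈ Set.Icc ((h t).im) ((h a).im) := by
        constructor
        · rw [htim]; nlinarith
        · nlinarith
      obtain ⟨u, hu, hval⟩ := intermediate_value_Icc' ht.1 (hfc.mono hsub) hmem
      obtain ⟨m, hm⟩ := him u (hsub hu)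
      replace hval : (h u).im = (h a).im - Real.pi := hval
      rw [hval] at hm
      have h2 : Real.pi * (2 * (m : ℝ)) = Real.pi * (-1) := by linarith
      have h3 : (2 * (m : ℝ)) = -1 := mul_left_cancel₀ Real.pi_ne_zero h2
      have h4 : (2 * m : ℤ) = -1 := by exact_mod_cast h3
      omega
    · -- n > 0
      have hnge : (1 : ℝ) ≤ (n : ℝ) := by exact_mod_cast hgt
      have hmem : (h a).im + Real.pi ∈ Set.Icc ((h a).im) ((h t).im) := by
        constructor
        · nlinarith
        · rw [htim]; nlinarith
      obtain ⟨u, hu, hval⟩ := intermediate_value_Icc ht.1 (hfc.mono hsub) hmem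
      obtain ⟨m, hm⟩ := him u (hsub hu)
      replace hval : (h u).im = (h a).im + Real.pi := hval
      rw [hval] at hm
      have h2 : Real.pi * (2 * (m : ℝ)) = Real.pi * 1 := by linarith
      have h3 : (2 * (m : ℝ)) = 1 := mul_left_cancel₀ Real.pi_ne_zero h2
      have h4 : (2 * m : ℤ) = 1 := by exact_mod_cast h3
      omega
  rw [hn, hn0]
  simp

/-- Evaluating a homogeneous polynomial at a scaled point. -/
private lemma eval_mul_of_isHomogeneous {p : MvPolynomial (Fin 4) ℂ} {d : ℕ}
    (hhom : p.IsHomogeneous d) (c : ℂ) (x : Fin 4 → ℂ) :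
    MvPolynomial.eval (fun i => c * x i) p = c ^ d * MvPolynomial.eval x p := by
  rw [MvPolynomial.eval_eq, MvPolynomial.eval_eq, Finset.mul_sum]
  refine Finset.sum_congr rfl fun m hm => ?_
  have hw : Finsupp.weight 1 m = d := hhom (MvPolynomial.mem_support_iff.mp hm)
  have hdeg : ∑ i ∈ m.support, m i = d := by
    change Finsupp.weight (fun _ => 1) m = d at hw
    rw [← Finsupp.degree_eq_weight_one] at hw
    exact hw
  have h1 : ∏ i ∈ m.support, (c * x i) ^ m i
      = (∏ i ∈ m.support, c ^ m i) * ∏ i ∈ m.support, x i ^ m i := by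
    rw [← Finset.prod_mul_distrib]
    exact Finset.prod_congr rfl fun i _ => mul_pow _ _ _
  rw [h1, Finset.prod_pow_eq_pow_sum, hdeg]
  ring

/-- A nonzero homogeneous polynomial of odd degree on `ℂ⁴` has a nonzero real zero. -/
theorem odd_degree_homogeneous_has_real_zero
    (p : MvPolynomial (Fin 4) ℂ) (d : ℕ) (hd : Odd d)
    (hhom : p.IsHomogeneous d) (hp : p ≠ 0) :
    ∃ x : Fin 4 → ℝ, x ≠ 0 ∧ MvPolynomial.eval (fun i => (x i : ℂ)) p = 0 := by
  by_contra hcon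
  push_neg at hcon
  have hπ := Real.pi_pos
  -- the test family of points on the unit sphere of ℝ⁴
  set v : ℝ × ℝ → Fin 4 → ℝ := fun z =>
    ![Real.cos z.2 * Real.cos z.1, Real.cos z.2 * Real.sin z.1, Real.sin z.2, 0] with hv
  have hvne : ∀ z, v z ≠ 0 := by
    intro z hz
    have h0 := congrFun hz 0
    have h1 := congrFun hz 1
    have h2 := congrFun hz 2
    simp [hv] at h0 h1 h2
    rcases h0 with hc | hc
    · nlinarith [Real.sin_sq_add_cos_sq z.2]
    · rcases h1 with hc' | hc'
      · nlinarith [Real.sin_sq_add_cos_sq z.2]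
      · nlinarith [Real.sin_sq_add_cos_sq z.1]
  set g : ℝ × ℝ → ℂ := fun z => MvPolynomial.eval (fun i => ((v z i : ℝ) : ℂ)) p with hgdef
  have hg0 : ∀ z, g z ≠ 0 := fun z => hcon (v z) (hvne z)
  have hgc : Continuous g := by
    apply (MvPolynomial.continuous_eval p).comp
    refine continuous_pi fun i => Complex.continuous_ofReal.comp ?_
    fin_cases i <;> simp [hv] <;> fun_prop
  -- symmetries
  have hper : ∀ s : ℝ, g (2 * Real.pi, s) = g (0, s) := by
    intro s
    have hfun : (fun i => ((v (2 * Real.pi, s) i : ℝ) : ℂ))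
        = fun i => ((v (0, s) i : ℝ) : ℂ) := by
      funext i
      fin_cases i <;> simp [hv]
    simp only [hgdef]
    rw [hfun]
  have htop : ∀ θ : ℝ, g (θ, Real.pi / 2) = g (0, Real.pi / 2) := by
    intro θ
    have hfun : (fun i => ((v (θ, Real.pi / 2) i : ℝ) : ℂ))
        = fun i => ((v (0, Real.pi / 2) i : ℝ) : ℂ) := by
      funext i
      fin_cases i <;> simp [hv]
    simp only [hgdef]
    rw [hfun]
  have hant : ∀ θ : ℝ, g (θ + Real.pi, 0) = - g (θ, 0) := by
    intro θ
    have hfun : (fun i => ((v (θ + Real.pi, 0) i : ℝ) : ℂ))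
        = fun i => (-1 : ℂ) * ((v (θ, 0) i : ℝ) : ℂ) := by
      funext i
      fin_cases i <;>
        simp [hv, Real.cos_add_pi, Real.sin_add_pi]
    simp only [hgdef]
    rw [hfun, eval_mul_of_isHomogeneous hhom, hd.neg_one_pow]
    ring
  -- the compact rectangle
  set K : Set (ℝ × ℝ) := (Set.Icc (0:ℝ) (2 * Real.pi)) ×ˢ (Set.Icc (0:ℝ) (Real.pi / 2))
    with hK
  have hKc : IsCompact K := isCompact_Icc.prod isCompact_Icc
  have hK00 : ((0:ℝ), (0:ℝ)) ∈ K := by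
    constructor <;> constructor <;> positivity
  -- the minimum of ‖g‖ on K
  obtain ⟨z₀, hz₀K, hz₀⟩ := hKc.exists_isMinOn ⟨_, hK00⟩ (hgc.norm.continuousOn)
  set m : ℝ := ‖g z₀‖ with hmdef
  have hm : 0 < m := norm_pos_iff.mpr (hg0 z₀)
  -- uniform continuity
  have hug := hKc.uniformContinuousOn_of_continuous hgc.continuousOn
  rw [Metric.uniformContinuousOn_iff] at hug
  obtain ⟨δ, hδ, hδ'⟩ := hug m hm
  obtain ⟨N, hN⟩ := exists_nat_gt ((2 * Real.pi + 1) / δ)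
  have hNpos : 0 < (N : ℝ) := lt_trans (by positivity) hN
  have hNne : (N : ℝ) ≠ 0 := ne_of_gt hNpos
  have h2πN : 2 * Real.pi / N < δ := by
    rw [div_lt_iff₀ hNpos]
    have h1 : 2 * Real.pi + 1 < N * δ := by
      have := (div_lt_iff₀ hδ).mp hN
      linarith
    nlinarith
  -- subdivision points
  set P : ℕ → ℝ × ℝ → ℝ × ℝ := fun j z => ((j : ℝ) / N * z.1, (j : ℝ) / N * z.2) with hP
  have hPmem : ∀ z ∈ K, ∀ j : ℕ, j ≤ N → P j z ∈ K := by
    intro z hz j hj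
    have hz1 := hz.1
    have hz2 := hz.2
    have hj01 : (0:ℝ) ≤ (j : ℝ) / N := by positivity
    have hj11 : (j : ℝ) / N ≤ 1 := by
      rw [div_le_one hNpos]; exact_mod_cast hj
    constructor
    · constructor
      · exact mul_nonneg hj01 hz1.1
      · calc (j : ℝ) / N * z.1 ≤ 1 * z.1 := by
              apply mul_le_mul_of_nonneg_right hj11 hz1.1
        _ = z.1 := one_mul _
        _ ≤ 2 * Real.pi := hz1.2
    · constructor
      · exact mul_nonneg hj01 hz2.1
      · calc (j : ℝ) / N * z.2 ≤ 1 * z.2 := by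
              apply mul_le_mul_of_nonneg_right hj11 hz2.1
        _ = z.2 := one_mul _
        _ ≤ Real.pi / 2 := hz2.2
  have hPdist : ∀ z ∈ K, ∀ j : ℕ, dist (P (j+1) z) (P j z) < δ := by
    intro z hz j
    have hz1 := hz.1
    have hz2 := hz.2
    have habs : ∀ w : ℝ, 0 ≤ w → w ≤ 2 * Real.pi →
        dist (((j:ℝ)+1) / N * w) ((j:ℝ) / N * w) < δ := by
      intro w hw0 hw2
      rw [Real.dist_eq, ← sub_mul]
      have : ((j:ℝ)+1) / N - (j:ℝ) / N = 1 / N := by field_simp; ring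
      rw [this, abs_mul, _root_.abs_of_nonneg (by positivity : (0:ℝ) ≤ 1 / (N:ℝ)),
        _root_.abs_of_nonneg hw0]
      calc 1 / (N:ℝ) * w ≤ 1 / N * (2 * Real.pi) := by
            apply mul_le_mul_of_nonneg_left hw2 (by positivity)
      _ = 2 * Real.pi / N := by ring
      _ < δ := h2πN
    rw [Prod.dist_eq, max_lt_iff]
    constructor
    · have := habs z.1 hz1.1 hz1.2
      simpa [hP] using this
    · have := habs z.2 hz2.1 (le_trans hz2.2 (by linarith))
      simpa [hP] using this
  -- ratios along the subdivision lie in the slit plane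
  have hmin : ∀ z ∈ K, m ≤ ‖g z‖ := fun z hz => hz₀ hz
  have hratio : ∀ z ∈ K, ∀ j : ℕ, j + 1 ≤ N →
      ‖g (P (j+1) z) / g (P j z) - 1‖ < 1 := by
    intro z hz j hj
    have ha : P (j+1) z ∈ K := hPmem z hz (j+1) hj
    have hb : P j z ∈ K := hPmem z hz j (by omega)
    have hdst := hδ' _ ha _ hb (hPdist z hz j)
    rw [dist_eq_norm] at hdst
    have hbne := hg0 (P j z)
    have heq : g (P (j+1) z) / g (P j z) - 1 = (g (P (j+1) z) - g (P j z)) / g (P j z) := by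
      field_simp
    rw [heq, norm_div, div_lt_one (norm_pos_iff.mpr hbne)]
    exact lt_of_lt_of_le hdst (hmin _ hb)
  have hslit : ∀ z ∈ K, ∀ j : ℕ, j + 1 ≤ N →
      g (P (j+1) z) / g (P j z) ∈ Complex.slitPlane := by
    intro z hz j hj
    have := Complex.mem_slitPlane_of_norm_lt_one (hratio z hz j hj)
    simpa using this
  -- the logarithm
  set L : ℝ × ℝ → ℂ := fun z => Complex.log (g (0, 0)) +
      ∑ j ∈ Finset.range N, Complex.log (g (P (j+1) z) / g (P j z)) with hL
  have hP0 : ∀ z, P 0 z = (0, 0) := by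
    intro z; simp [hP]
  have hPN : ∀ z, P N z = z := by
    intro z
    simp only [hP]
    rw [div_self hNne]
    simp
  have htel : ∀ (n : ℕ) (z : ℝ × ℝ),
      ∏ j ∈ Finset.range n, (g (P (j+1) z) / g (P j z)) = g (P n z) / g (P 0 z) := by
    intro n z
    induction n with
    | zero => simp [div_self (hg0 (P 0 z))]
    | succ k ih =>
      rw [Finset.prod_range_succ, ih]
      rw [div_mul_div_comm, mul_comm (g (P k z)) (g (P (k+1) z)),
        mul_div_mul_right _ _ (hg0 (P k z))]
  have hexpL : ∀ z, Complex.exp (L z) = g z := by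
    intro z
    rw [hL]
    rw [Complex.exp_add, Complex.exp_sum, Complex.exp_log (hg0 _)]
    have : ∀ j ∈ Finset.range N, Complex.exp (Complex.log (g (P (j+1) z) / g (P j z)))
        = g (P (j+1) z) / g (P j z) := fun j _ =>
      Complex.exp_log (div_ne_zero (hg0 _) (hg0 _))
    rw [Finset.prod_congr rfl this, htel N z, hPN, hP0]
    rw [mul_comm, div_mul_cancel₀ _ (hg0 _)]
  -- continuity of L on K
  have hPc : ∀ j : ℕ, Continuous (P j) := by
    intro j
    apply Continuous.prodMk <;> fun_prop
  have hrc : ∀ j : ℕ, Continuous (fun z => g (P (j+1) z) / g (P j z)) := by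
    intro j
    exact (hgc.comp (hPc (j+1))).div (hgc.comp (hPc j)) fun z => hg0 _
  have hLc : ContinuousOn L K := by
    rw [hL]
    apply ContinuousOn.add continuousOn_const
    apply continuousOn_finset_sum
    intro j hj
    intro z hz
    have hj' : j + 1 ≤ N := Finset.mem_range.mp hj
    exact (((hrc j).continuousAt).clog (hslit z hz j hj')).continuousWithinAt
  -- Edge 1 : the top edge, where g is constant
  have hedge1 : L (2 * Real.pi, Real.pi / 2) = L (0, Real.pi / 2) := by
    have hmaps : ∀ θ ∈ Set.Icc (0:ℝ) (2 * Real.pi), ((θ, Real.pi / 2) : ℝ × ℝ) ∈ K := by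
      intro θ hθ
      exact ⟨hθ, ⟨by positivity, le_refl _⟩⟩
    have hc : ContinuousOn (fun θ : ℝ => L (θ, Real.pi / 2)) (Set.Icc 0 (2 * Real.pi)) := by
      apply hLc.comp (Continuous.continuousOn (by fun_prop))
      intro θ hθ
      exact hmaps θ hθ
    have he : ∀ θ ∈ Set.Icc (0:ℝ) (2 * Real.pi),
        Complex.exp (L (θ, Real.pi / 2)) = Complex.exp (L (0, Real.pi / 2)) := by
      intro θ hθ
      rw [hexpL, hexpL, htop θ]
    exact const_of_exp_eq (by positivity) _ hc he (2 * Real.pi)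
      ⟨by positivity, le_refl _⟩
  -- Edge 2 : the two vertical edges
  have hedge2 : L (2 * Real.pi, 0) = L (0, 0) := by
    have hmaps2 : ∀ s ∈ Set.Icc (0:ℝ) (Real.pi / 2), ((2 * Real.pi, s) : ℝ × ℝ) ∈ K :=
      fun s hs => ⟨⟨by positivity, le_refl _⟩, hs⟩
    have hmaps0 : ∀ s ∈ Set.Icc (0:ℝ) (Real.pi / 2), ((0, s) : ℝ × ℝ) ∈ K :=
      fun s hs => ⟨⟨le_refl _, by positivity⟩, hs⟩
    have hc : ContinuousOn (fun s : ℝ => L (2 * Real.pi, s) - L (0, s))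
        (Set.Icc 0 (Real.pi / 2)) := by
      apply ContinuousOn.sub
      · apply hLc.comp (Continuous.continuousOn (by fun_prop))
        intro s hs; exact hmaps2 s hs
      · apply hLc.comp (Continuous.continuousOn (by fun_prop))
        intro s hs; exact hmaps0 s hs
    have he : ∀ s ∈ Set.Icc (0:ℝ) (Real.pi / 2),
        Complex.exp (L (2 * Real.pi, s) - L (0, s))
          = Complex.exp (L (2 * Real.pi, 0) - L (0, 0)) := by
      intro s hs
      rw [Complex.exp_sub, Complex.exp_sub, hexpL, hexpL, hexpL, hexpL,
        hper s, hper 0, div_self (hg0 _), div_self (hg0 _)]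
    have hcst := const_of_exp_eq (by positivity) _ hc he (Real.pi / 2)
      ⟨by positivity, le_refl _⟩
    rw [hedge1, sub_self] at hcst
    have : L (2 * Real.pi, 0) - L (0, 0) = 0 := hcst.symm
    linear_combination this
  -- Edge 3 : the antipodal relation on the bottom edge
  have hmaps3 : ∀ θ ∈ Set.Icc (0:ℝ) Real.pi, ((θ + Real.pi, 0) : ℝ × ℝ) ∈ K := by
    intro θ hθ
    have h1 := hθ.1
    have h2 := hθ.2
    refine ⟨⟨show (0:ℝ) ≤ θ + Real.pi by linarith, show θ + Real.pi ≤ 2 * Real.pi by linarith⟩,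
      ⟨le_refl _, by positivity⟩⟩
  have hmaps4 : ∀ θ ∈ Set.Icc (0:ℝ) Real.pi, ((θ, 0) : ℝ × ℝ) ∈ K := by
    intro θ hθ
    have h1 := hθ.1
    have h2 := hθ.2
    refine ⟨⟨show (0:ℝ) ≤ θ by linarith, show θ ≤ 2 * Real.pi by linarith⟩,
      ⟨le_refl _, by positivity⟩⟩
  have hc3 : ContinuousOn (fun θ : ℝ => L (θ + Real.pi, 0) - L (θ, 0))
      (Set.Icc 0 Real.pi) := by
    apply ContinuousOn.sub
    · apply hLc.comp (Continuous.continuousOn (by fun_prop))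
      intro θ hθ; exact hmaps3 θ hθ
    · apply hLc.comp (Continuous.continuousOn (by fun_prop))
      intro θ hθ; exact hmaps4 θ hθ
  have he3 : ∀ θ ∈ Set.Icc (0:ℝ) Real.pi,
      Complex.exp (L (θ + Real.pi, 0) - L (θ, 0))
        = Complex.exp (L (0 + Real.pi, 0) - L (0, 0)) := by
    intro θ hθ
    rw [Complex.exp_sub, Complex.exp_sub, hexpL, hexpL, hexpL, hexpL,
      hant θ, hant 0, neg_div, neg_div, div_self (hg0 _), div_self (hg0 _)]
  have hcst3 := const_of_exp_eq Real.pi_pos.le _ hc3 he3 Real.pi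
    ⟨Real.pi_pos.le, le_refl _⟩
  -- hcst3 : L (π + π, 0) - L (π, 0) = L (0 + π, 0) - L (0, 0)
  have hππ : Real.pi + Real.pi = 2 * Real.pi := by ring
  rw [hππ] at hcst3
  have h0π : (0:ℝ) + Real.pi = Real.pi := by ring
  rw [h0π] at hcst3
  -- conclude L (π, 0) = L (0, 0)
  have hBA : L (Real.pi, 0) = L (0, 0) := by
    linear_combination (hedge2 - hcst3) / 2
  -- contradiction: exp 0 = -1
  have hx : Complex.exp (L (Real.pi, 0) - L (0, 0)) = g (Real.pi, 0) / g (0, 0) := by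
    rw [Complex.exp_sub, hexpL, hexpL]
  rw [hBA, sub_self, Complex.exp_zero] at hx
  have hπ0 : g (Real.pi, 0) = - g (0, 0) := by
    have := hant 0
    rwa [zero_add] at this
  rw [hπ0, neg_div, div_self (hg0 _)] at hx
  norm_num at hx
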